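/- Let π_a : (0,1) → [0,∞) and π_v : (0,∞) → [0,∞) be measurable prior densities related by π_v(v) = (1 + 2vn₀/σ₀²)⁻² · π_a(f(v)) for all v > 0. Define the normalizing constant c(a₀) = ∫_ℝ exp{−(a₀/(2σ₀²))(S₀ + n₀(ȳ₀ − t)²)} dt for a₀ ∈ (0,1), the normalized-power-prior marginal g_NPP(θ) = ∫_{(0,1)} exp{−(n/(2σ²))(ȳ − θ)²} · exp{−(a₀/(2σ₀²))(S₀ + n₀(ȳ₀ − θ)²)} · c(a₀)⁻¹ · π_a(a₀) da₀, and the hierarchical-model marginal (with improper uniform prior on μ) g_BHM(θ) = ∫_{(0,∞)} ∫_ℝ ∫_ℝ v⁻¹ exp{−(n/(2σ²))(ȳ − θ)² − (n₀/(2σ₀²))(ȳ₀ − θ₀)² − ((θ − μ)² + (θ₀ − μ)²)/(2v)} π_v(v) dθ₀ dμ dv. Assume g_NPP(θ) and g_BHM(θ) are finite for every θ ∈ ℝ. Then there exists a constant C > 0, not depending on θ, such that g_NPP(θ) = C · g_BHM(θ) for all θ ∈ ℝ. -/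

import Mathlib

open MeasureTheory Real Set


lemma gauss1 (p a : ℝ) : ∫ x : ℝ, Real.exp (-p * (x - a) ^ 2) = Real.sqrt (π / p) := by
  have h := MeasureTheory.integral_sub_right_eq_self (μ := volume) (fun x : ℝ => Real.exp (-p * x ^ 2)) a
  rw [← integral_gaussian p]
  exact h

lemma gauss2 (p q a b : ℝ) (hp : 0 < p) (hq : 0 < q) :
    ∫ x : ℝ, Real.exp (-p * (x - a) ^ 2 - q * (x - b) ^ 2)
      = Real.sqrt (π / (p + q)) * Real.exp (-(p * q / (p + q)) * (a - b) ^ 2) := by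
  have hpq : (0:ℝ) < p + q := by linarith
  have key : ∀ x : ℝ, -p * (x - a) ^ 2 - q * (x - b) ^ 2
      = -(p + q) * (x - (p * a + q * b) / (p + q)) ^ 2 + (-(p * q / (p + q)) * (a - b) ^ 2) := by
    intro x
    field_simp
    ring
  simp_rw [key, Real.exp_add]
  rw [MeasureTheory.integral_mul_const, gauss1]

lemma bhm_inner (A p v ybar0 θ w : ℝ) (hp : 0 < p) (hv : 0 < v) :
    (∫ μ : ℝ, ∫ θ0 : ℝ,
        v⁻¹ * Real.exp (A - p * (ybar0 - θ0) ^ 2 - ((θ - μ) ^ 2 + (θ0 - μ) ^ 2) / (2 * v)) * w)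
      = 2 * π * Real.sqrt ((1 + 4 * p * v)⁻¹) * Real.exp A *
          Real.exp (-((1 + 4 * p * v)⁻¹ * p) * (ybar0 - θ) ^ 2) * w := by
  have hv' : v ≠ 0 := hv.ne'
  have hq : (0:ℝ) < (2*v)⁻¹ := by positivity
  have hpq : (0:ℝ) < p + (2*v)⁻¹ := by positivity
  set r : ℝ := p * (2*v)⁻¹ / (p + (2*v)⁻¹) with hr_def
  have hr : 0 < r := by positivity
  have hqr : (0:ℝ) < (2*v)⁻¹ + r := by positivity
  have h4 : (0:ℝ) < 1 + 4*p*v := by positivity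
  have h1 : ∀ μ : ℝ, (∫ θ0 : ℝ,
        v⁻¹ * Real.exp (A - p * (ybar0 - θ0) ^ 2 - ((θ - μ) ^ 2 + (θ0 - μ) ^ 2) / (2 * v)) * w)
      = (v⁻¹ * w * Real.exp (A - (θ - μ) ^ 2 / (2 * v))) *
          (Real.sqrt (π / (p + (2*v)⁻¹)) * Real.exp (-(p * (2*v)⁻¹ / (p + (2*v)⁻¹)) * (ybar0 - μ) ^ 2)) := by
    intro μ
    have key : ∀ θ0 : ℝ,
        v⁻¹ * Real.exp (A - p * (ybar0 - θ0) ^ 2 - ((θ - μ) ^ 2 + (θ0 - μ) ^ 2) / (2 * v)) * w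
        = (v⁻¹ * w * Real.exp (A - (θ - μ) ^ 2 / (2 * v))) *
            Real.exp (-p * (θ0 - ybar0) ^ 2 - (2*v)⁻¹ * (θ0 - μ) ^ 2) := by
      intro θ0
      rw [show A - p * (ybar0 - θ0) ^ 2 - ((θ - μ) ^ 2 + (θ0 - μ) ^ 2) / (2 * v)
          = (A - (θ - μ) ^ 2 / (2 * v)) + (-p * (θ0 - ybar0) ^ 2 - (2*v)⁻¹ * (θ0 - μ) ^ 2) from by
        field_simp; ring, Real.exp_add]
      ring
    simp_rw [key]
    rw [MeasureTheory.integral_const_mul, gauss2 p ((2*v)⁻¹) ybar0 μ hp hq]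
  simp_rw [h1]
  have key2 : ∀ μ : ℝ,
      (v⁻¹ * w * Real.exp (A - (θ - μ) ^ 2 / (2 * v))) *
          (Real.sqrt (π / (p + (2*v)⁻¹)) * Real.exp (-(p * (2*v)⁻¹ / (p + (2*v)⁻¹)) * (ybar0 - μ) ^ 2))
      = (v⁻¹ * w * Real.sqrt (π / (p + (2*v)⁻¹)) * Real.exp A) *
          Real.exp (-(2*v)⁻¹ * (μ - θ) ^ 2 - r * (μ - ybar0) ^ 2) := by
    intro μ
    have e1 : Real.exp (A - (θ - μ) ^ 2 / (2 * v)) *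
        Real.exp (-(p * (2*v)⁻¹ / (p + (2*v)⁻¹)) * (ybar0 - μ) ^ 2)
        = Real.exp A * Real.exp (-(2*v)⁻¹ * (μ - θ) ^ 2 - r * (μ - ybar0) ^ 2) := by
      rw [← Real.exp_add, ← Real.exp_add]
      congr 1
      rw [hr_def]
      field_simp
      ring
    calc (v⁻¹ * w * Real.exp (A - (θ - μ) ^ 2 / (2 * v))) *
          (Real.sqrt (π / (p + (2*v)⁻¹)) * Real.exp (-(p * (2*v)⁻¹ / (p + (2*v)⁻¹)) * (ybar0 - μ) ^ 2))
        = (v⁻¹ * w * Real.sqrt (π / (p + (2*v)⁻¹))) *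
            (Real.exp (A - (θ - μ) ^ 2 / (2 * v)) *
              Real.exp (-(p * (2*v)⁻¹ / (p + (2*v)⁻¹)) * (ybar0 - μ) ^ 2)) := by ring
      _ = (v⁻¹ * w * Real.sqrt (π / (p + (2*v)⁻¹))) *
            (Real.exp A * Real.exp (-(2*v)⁻¹ * (μ - θ) ^ 2 - r * (μ - ybar0) ^ 2)) := by rw [e1]
      _ = (v⁻¹ * w * Real.sqrt (π / (p + (2*v)⁻¹)) * Real.exp A) *
            Real.exp (-(2*v)⁻¹ * (μ - θ) ^ 2 - r * (μ - ybar0) ^ 2) := by ring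
  simp_rw [key2]
  rw [MeasureTheory.integral_const_mul, gauss2 ((2*v)⁻¹) r θ ybar0 hq hr]
  have hb : Real.sqrt (π / (p + (2*v)⁻¹)) * Real.sqrt (π / ((2*v)⁻¹ + r))
      = 2 * π * v * Real.sqrt ((1 + 4*p*v)⁻¹) := by
    rw [← Real.sqrt_mul (by positivity)]
    rw [show π / (p + (2*v)⁻¹) * (π / ((2*v)⁻¹ + r)) = (2*π*v)^2 * (1 + 4*p*v)⁻¹ from by
      rw [hr_def]; field_simp; ring]
    rw [Real.sqrt_mul (by positivity), Real.sqrt_sq (by positivity)]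
  have hexp : (-((2*v)⁻¹ * r / ((2*v)⁻¹ + r)) * (θ - ybar0) ^ 2 : ℝ)
      = -((1 + 4*p*v)⁻¹ * p) * (ybar0 - θ) ^ 2 := by
    rw [hr_def]; field_simp; ring
  rw [hexp]
  calc v⁻¹ * w * Real.sqrt (π / (p + (2*v)⁻¹)) * Real.exp A *
        (Real.sqrt (π / ((2*v)⁻¹ + r)) * Real.exp (-((1 + 4*p*v)⁻¹ * p) * (ybar0 - θ) ^ 2))
      = v⁻¹ * (Real.sqrt (π / (p + (2*v)⁻¹)) * Real.sqrt (π / ((2*v)⁻¹ + r))) *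
          (Real.exp A * Real.exp (-((1 + 4*p*v)⁻¹ * p) * (ybar0 - θ) ^ 2) * w) := by ring
    _ = v⁻¹ * (2 * π * v * Real.sqrt ((1 + 4*p*v)⁻¹)) *
          (Real.exp A * Real.exp (-((1 + 4*p*v)⁻¹ * p) * (ybar0 - θ) ^ 2) * w) := by rw [hb]
    _ = 2 * π * Real.sqrt ((1 + 4*p*v)⁻¹) * Real.exp A *
          Real.exp (-((1 + 4*p*v)⁻¹ * p) * (ybar0 - θ) ^ 2) * w := by
        field_simp

lemma cov_Ioo (D : ℝ) (hD : 0 < D) (g : ℝ → ℝ) :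
    ∫ a in Ioo (0:ℝ) 1, g a
      = ∫ v in Ioi (0:ℝ), |(-D / (1 + D * v) ^ 2)| * g ((1 + D * v)⁻¹) := by
  have himg : (fun v : ℝ => (1 + D * v)⁻¹) '' Ioi 0 = Ioo 0 1 := by
    ext a
    simp only [mem_image, mem_Ioi, mem_Ioo]
    constructor
    · rintro ⟨v, hv, rfl⟩
      have h1 : 1 < 1 + D * v := by nlinarith
      exact ⟨inv_pos.mpr (by linarith), inv_lt_one_of_one_lt₀ h1⟩
    · rintro ⟨ha0, ha1⟩
      refine ⟨(a⁻¹ - 1) / D, ?_, ?_⟩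
      · have : 1 < a⁻¹ := (one_lt_inv₀ ha0).mpr ha1
        exact div_pos (by linarith) hD
      · rw [show 1 + D * ((a⁻¹ - 1) / D) = a⁻¹ by field_simp; ring, inv_inv]
  have hinj : InjOn (fun v : ℝ => (1 + D * v)⁻¹) (Ioi 0) := by
    intro x hx y hy hxy
    simp only at hxy
    have := inv_injective hxy
    have hDx : D * x = D * y := by linarith
    exact mul_left_cancel₀ hD.ne' hDx
  have hderiv : ∀ v ∈ Ioi (0:ℝ),
      HasDerivWithinAt (fun v : ℝ => (1 + D * v)⁻¹) (-D / (1 + D * v) ^ 2) (Ioi 0) v := by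
    intro v hv
    have hv0 : (0:ℝ) < v := hv
    have h1 : HasDerivAt (fun y : ℝ => 1 + D * y) D v := by
      simpa using ((hasDerivAt_id v).const_mul D).const_add 1
    have hne : (1 + D * v) ≠ 0 := by positivity
    exact (h1.inv hne).hasDerivWithinAt
  rw [← himg, MeasureTheory.integral_image_eq_integral_abs_deriv_smul measurableSet_Ioi hderiv hinj g]
  simp only [smul_eq_mul]


/-- if the prior `π_v` on the BHM variance and the prior `π_a` on the NPP
discounting parameter are related by `π_v(v) = (1 + 2vn₀/σ₀²)⁻² π_a(f(v))`, then the
marginal posteriors of `θ` under the NPP and the BHM are proportional (hence identical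
once normalized). -/
theorem stmt_0 (σ2 σ02 n n0 : ℝ) (hσ2 : 0 < σ2) (hσ02 : 0 < σ02) (hn : 0 < n) (hn0 : 0 < n0)
    (ybar ybar0 S0 : ℝ) (hS0 : 0 ≤ S0)
    (f : ℝ → ℝ) (hf : ∀ v, f v = (1 + 2 * v * n0 / σ02)⁻¹)
    (πa πv : ℝ → ℝ) (hπa_meas : Measurable πa) (hπv_meas : Measurable πv)
    (hπa_nonneg : ∀ a ∈ Ioo (0 : ℝ) 1, 0 ≤ πa a)
    (hπv_nonneg : ∀ v ∈ Ioi (0 : ℝ), 0 ≤ πv v)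
    (hrel : ∀ v ∈ Ioi (0 : ℝ), πv v = ((1 + 2 * v * n0 / σ02) ^ 2)⁻¹ * πa (f v))
    (c : ℝ → ℝ)
    (hc : ∀ a0, c a0 = ∫ t : ℝ, Real.exp (-(a0 / (2 * σ02)) * (S0 + n0 * (ybar0 - t) ^ 2)))
    (gNPP gBHM : ℝ → ℝ)
    (hgNPP : ∀ θ, gNPP θ = ∫ a0 in Ioo (0 : ℝ) 1,
        Real.exp (-(n / (2 * σ2)) * (ybar - θ) ^ 2) *
          Real.exp (-(a0 / (2 * σ02)) * (S0 + n0 * (ybar0 - θ) ^ 2)) * (c a0)⁻¹ * πa a0)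
    (hgBHM : ∀ θ, gBHM θ = ∫ v in Ioi (0 : ℝ), ∫ μ : ℝ, ∫ θ0 : ℝ,
        v⁻¹ * Real.exp (-(n / (2 * σ2)) * (ybar - θ) ^ 2 -
            (n0 / (2 * σ02)) * (ybar0 - θ0) ^ 2 -
            ((θ - μ) ^ 2 + (θ0 - μ) ^ 2) / (2 * v)) * πv v)
    (hNPP_fin : ∀ θ : ℝ, IntegrableOn (fun a0 =>
        Real.exp (-(n / (2 * σ2)) * (ybar - θ) ^ 2) *
          Real.exp (-(a0 / (2 * σ02)) * (S0 + n0 * (ybar0 - θ) ^ 2)) * (c a0)⁻¹ * πa a0)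
        (Ioo (0 : ℝ) 1))
    (hBHM_fin : ∀ θ : ℝ, IntegrableOn (fun v => ∫ μ : ℝ, ∫ θ0 : ℝ,
        v⁻¹ * Real.exp (-(n / (2 * σ2)) * (ybar - θ) ^ 2 -
            (n0 / (2 * σ02)) * (ybar0 - θ0) ^ 2 -
            ((θ - μ) ^ 2 + (θ0 - μ) ^ 2) / (2 * v)) * πv v)
        (Ioi (0 : ℝ))) :
    ∃ C : ℝ, 0 < C ∧ ∀ θ : ℝ, gNPP θ = C * gBHM θ := by
  have hπ : (0:ℝ) < π := Real.pi_pos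
  set p : ℝ := n0 / (2 * σ02) with hp_def
  have hp : 0 < p := by positivity
  set D : ℝ := 2 * n0 / σ02 with hD_def
  have hD : 0 < D := by positivity
  -- value of c
  have hcval : ∀ a0 : ℝ, c a0
      = Real.exp (-(a0 / (2 * σ02)) * S0) * Real.sqrt (π / (a0 * n0 / (2 * σ02))) := by
    intro a0
    rw [hc]
    have key : ∀ t : ℝ, (-(a0 / (2 * σ02)) * (S0 + n0 * (ybar0 - t) ^ 2) : ℝ)
        = -(a0 * n0 / (2 * σ02)) * (t - ybar0) ^ 2 + (-(a0 / (2 * σ02)) * S0) := by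
      intro t; ring
    simp_rw [key, Real.exp_add]
    rw [MeasureTheory.integral_mul_const, gauss1]
    ring
  -- the common integral J
  set J : ℝ → ℝ := fun θ => ∫ a in Ioo (0:ℝ) 1,
      Real.sqrt a * Real.exp (-(p * (ybar0 - θ) ^ 2) * a) * πa a with hJ_def
  set E : ℝ → ℝ := fun θ => Real.exp (-(n / (2 * σ2)) * (ybar - θ) ^ 2) with hE_def
  -- NPP side
  have hNPP : ∀ θ : ℝ, gNPP θ = (Real.sqrt (n0 / (2 * π * σ02)) * E θ) * J θ := by
    intro θ
    rw [hgNPP]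
    have heq : ∀ a0 ∈ Ioo (0:ℝ) 1,
        E θ * Real.exp (-(a0 / (2 * σ02)) * (S0 + n0 * (ybar0 - θ) ^ 2)) * (c a0)⁻¹ * πa a0
        = (Real.sqrt (n0 / (2 * π * σ02)) * E θ) *
            (Real.sqrt a0 * Real.exp (-(p * (ybar0 - θ) ^ 2) * a0) * πa a0) := by
      intro a0 ha0
      have ha0pos : (0:ℝ) < a0 := ha0.1
      have hs : (0:ℝ) < a0 * n0 / (2 * σ02) := by positivity
      have h1 : (Real.sqrt (π / (a0 * n0 / (2 * σ02))))⁻¹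
          = Real.sqrt a0 * Real.sqrt (n0 / (2 * π * σ02)) := by
        rw [← Real.sqrt_inv,
          show ((π / (a0 * n0 / (2 * σ02)))⁻¹ : ℝ) = a0 * (n0 / (2 * π * σ02)) from by
            field_simp,
          Real.sqrt_mul ha0pos.le]
      have he2 : (Real.exp (-(a0 / (2 * σ02)) * S0))⁻¹ = Real.exp ((a0 / (2 * σ02)) * S0) := by
        rw [← Real.exp_neg]; ring_nf
      have hexp : Real.exp (-(a0 / (2 * σ02)) * (S0 + n0 * (ybar0 - θ) ^ 2)) *
          Real.exp ((a0 / (2 * σ02)) * S0) = Real.exp (-(p * (ybar0 - θ) ^ 2) * a0) := by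
        rw [← Real.exp_add]; congr 1; rw [hp_def]; ring
      calc E θ * Real.exp (-(a0 / (2 * σ02)) * (S0 + n0 * (ybar0 - θ) ^ 2)) * (c a0)⁻¹ * πa a0
          = E θ * Real.exp (-(a0 / (2 * σ02)) * (S0 + n0 * (ybar0 - θ) ^ 2)) *
              (Real.exp ((a0 / (2 * σ02)) * S0) *
                (Real.sqrt a0 * Real.sqrt (n0 / (2 * π * σ02)))) * πa a0 := by
            rw [hcval a0, mul_inv, he2, h1]
        _ = (Real.sqrt (n0 / (2 * π * σ02)) * E θ) *
              (Real.sqrt a0 * (Real.exp (-(a0 / (2 * σ02)) * (S0 + n0 * (ybar0 - θ) ^ 2)) *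
                Real.exp ((a0 / (2 * σ02)) * S0)) * πa a0) := by ring
        _ = (Real.sqrt (n0 / (2 * π * σ02)) * E θ) *
              (Real.sqrt a0 * Real.exp (-(p * (ybar0 - θ) ^ 2) * a0) * πa a0) := by rw [hexp]
    rw [MeasureTheory.setIntegral_congr_fun measurableSet_Ioo heq, MeasureTheory.integral_const_mul]
  -- BHM side
  have hBHM : ∀ θ : ℝ, gBHM θ = ((2 * π / D) * E θ) * J θ := by
    intro θ
    rw [hgBHM]
    have heq : ∀ v ∈ Ioi (0:ℝ),
        (∫ μ : ℝ, ∫ θ0 : ℝ, v⁻¹ * Real.exp (-(n / (2 * σ2)) * (ybar - θ) ^ 2 -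
            (n0 / (2 * σ02)) * (ybar0 - θ0) ^ 2 -
            ((θ - μ) ^ 2 + (θ0 - μ) ^ 2) / (2 * v)) * πv v)
        = ((2 * π / D) * E θ) * (|(-D / (1 + D * v) ^ 2)| *
            (Real.sqrt ((1 + D * v)⁻¹) *
              Real.exp (-(p * (ybar0 - θ) ^ 2) * (1 + D * v)⁻¹) * πa ((1 + D * v)⁻¹))) := by
      intro v hv
      have hv0 : (0:ℝ) < v := hv
      have h1Dv : (0:ℝ) < 1 + D * v := by positivity
      rw [bhm_inner (-(n / (2 * σ2)) * (ybar - θ) ^ 2) p v ybar0 θ (πv v) hp hv0]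
      rw [show (1 + 4 * p * v : ℝ) = 1 + D * v from by rw [hp_def, hD_def]; field_simp; ring]
      rw [hrel v hv, hf v,
        show (1 + 2 * v * n0 / σ02 : ℝ) = 1 + D * v from by rw [hD_def]; ring]
      have habs : |(-D / (1 + D * v) ^ 2)| = D / (1 + D * v) ^ 2 := by
        rw [abs_div, abs_neg, abs_of_pos hD, abs_of_pos (by positivity)]
      rw [habs,
        show (-((1 + D * v)⁻¹ * p) * (ybar0 - θ) ^ 2 : ℝ)
          = -(p * (ybar0 - θ) ^ 2) * (1 + D * v)⁻¹ from by ring]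
      rw [hE_def]
      field_simp
    rw [MeasureTheory.setIntegral_congr_fun measurableSet_Ioi heq, MeasureTheory.integral_const_mul]
    congr 1
    exact (cov_Ioo D hD (fun a => Real.sqrt a * Real.exp (-(p * (ybar0 - θ) ^ 2) * a) * πa a)).symm
  -- conclude
  refine ⟨Real.sqrt (n0 / (2 * π * σ02)) * (D / (2 * π)), by positivity, fun θ => ?_⟩
  rw [hNPP θ, hBHM θ]
  field_simp
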